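/- Suppose Z_t = α Y_t + M_t for t = 1,...,k, where α is a real constant and (M_1,...,M_k) is independent of (Y_1,...,Y_k). Then S_Z = sum Z_t is conditionally independent of (Y_1,...,Y_k) given S_Y = sum Y_t. -/

import Mathlib

open MeasureTheory ProbabilityTheory

theorem aux_condIndep {Ω : Type*} [mΩ : MeasurableSpace Ω] [StandardBorelSpace Ω]
    {μ : Measure Ω} [IsProbabilityMeasure μ]
    {m₁ m₂ m' : MeasurableSpace Ω} (h1 : m₁ ≤ mΩ) (h2 : m₂ ≤ mΩ) (h'2 : m' ≤ m₂)
    (hm' : m' ≤ mΩ) (hindep : ProbabilityTheory.Indep m₁ m₂ μ) :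
    ProbabilityTheory.CondIndep m' (m₁ ⊔ m') m₂ hm' μ := by
  set p1 : Set (Set Ω) := {s | ∃ a c, MeasurableSet[m₁] a ∧ MeasurableSet[m'] c ∧ s = a ∩ c}
    with hp1def
  set p2 : Set (Set Ω) := {s | MeasurableSet[m₂] s} with hp2def
  have hp1pi : IsPiSystem p1 := by
    rintro s ⟨a, c, ha, hc, rfl⟩ t ⟨a', c', ha', hc', rfl⟩ -
    exact ⟨a ∩ a', c ∩ c', ha.inter ha', hc.inter hc',
      by rw [Set.inter_inter_inter_comm]⟩
  have hp2pi : IsPiSystem p2 := fun s hs t ht _ => hs.inter ht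
  have hgen1 : m₁ ⊔ m' = MeasurableSpace.generateFrom p1 := by
    refine le_antisymm ?_ ?_
    · refine sup_le ?_ ?_
      · intro s hs
        exact MeasurableSpace.measurableSet_generateFrom
          ⟨s, Set.univ, hs, MeasurableSet.univ, (Set.inter_univ s).symm⟩
      · intro s hs
        exact MeasurableSpace.measurableSet_generateFrom
          ⟨Set.univ, s, MeasurableSet.univ, hs, (Set.univ_inter s).symm⟩
    · rw [MeasurableSpace.generateFrom_le_iff]
      rintro s ⟨a, c, ha, hc, rfl⟩
      exact MeasurableSet.inter (le_sup_left (a := m₁) (b := m') _ ha)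
        (le_sup_right (a := m₁) (b := m') _ hc)
  have hgen2 : m₂ = MeasurableSpace.generateFrom p2 :=
    (@MeasurableSpace.generateFrom_measurableSet Ω m₂).symm
  refine ProbabilityTheory.CondIndepSets.condIndep (sup_le h1 hm') h2 hp1pi hp2pi hgen1 hgen2 ?_
  rw [ProbabilityTheory.condIndepSets_iff]
  rotate_left
  · rintro s ⟨a, c, ha, hc, rfl⟩; exact (h1 _ ha).inter (hm' _ hc)
  · exact fun s hs => h2 _ hs
  rintro s t ⟨a, c, ha, hc, rfl⟩ ht
  letI : MeasurableSpace Ω := mΩ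
  have haΩ : MeasurableSet[mΩ] a := h1 _ ha
  have hcΩ : MeasurableSet[mΩ] c := hm' _ hc
  have htΩ : MeasurableSet[mΩ] t := h2 _ ht
  set r : ℝ := (μ a).toReal with hr
  have hint : ∀ {u : Set Ω}, MeasurableSet[mΩ] u →
      Integrable (u.indicator (fun _ => (1:ℝ))) μ :=
    fun {u} hu => MeasureTheory.Integrable.indicator (μ := μ) (integrable_const (1:ℝ)) hu
  have hstep1 : (μ⟦a | m₂⟧) =ᵐ[μ] fun _ => r := by
    have := condExp_indep_eq (μ := μ) (f := a.indicator (fun _ => (1:ℝ))) h1 h2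
      (stronglyMeasurable_const.indicator ha) hindep
    refine this.trans ?_
    filter_upwards with ω
    simp [MeasureTheory.integral_indicator_const (μ := μ) (1:ℝ) haΩ, hr, measureReal_def]
  have hstep2 : (μ⟦a ∩ t | m'⟧) =ᵐ[μ] fun ω => r * (μ⟦t | m'⟧) ω := by
    have htower : (μ⟦a ∩ t | m'⟧) =ᵐ[μ] μ[ (μ⟦a ∩ t | m₂⟧) | m'] :=
      (condExp_condExp_of_le h'2 h2).symm
    have heq1 : ((a ∩ t).indicator (fun _ => (1:ℝ))) =
        t.indicator (a.indicator (fun _ => (1:ℝ))) := by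
      rw [Set.indicator_indicator, Set.inter_comm]
    have hmid : (μ⟦a ∩ t | m₂⟧) =ᵐ[μ] fun ω => r * t.indicator (fun _ => (1:ℝ)) ω := by
      calc (μ⟦a ∩ t | m₂⟧) = μ[t.indicator (a.indicator (fun _ => (1:ℝ))) | m₂] := by
              rw [heq1]
        _ =ᵐ[μ] t.indicator (μ⟦a | m₂⟧) := condExp_indicator (hint haΩ) ht
        _ =ᵐ[μ] fun ω => r * t.indicator (fun _ => (1:ℝ)) ω := by
              filter_upwards [hstep1] with ω hω
              by_cases h : ω ∈ t <;> simp [h, hω]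
    have hsmul : (fun ω => r * t.indicator (fun _ => (1:ℝ)) ω)
        = r • (t.indicator (fun _ => (1:ℝ))) := by
      funext ω; simp [smul_eq_mul]
    calc (μ⟦a ∩ t | m'⟧) =ᵐ[μ] μ[ (μ⟦a ∩ t | m₂⟧) | m'] := htower
      _ =ᵐ[μ] μ[ (fun ω => r * t.indicator (fun _ => (1:ℝ)) ω) | m'] :=
          condExp_congr_ae hmid
      _ =ᵐ[μ] fun ω => r * (μ⟦t | m'⟧) ω := by
          rw [hsmul]
          filter_upwards [condExp_smul (μ := μ) (m := m') r
            (t.indicator (fun _ => (1:ℝ)))] with ω hω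
          simpa [smul_eq_mul] using hω
  have hstep3 : (μ⟦a | m'⟧) =ᵐ[μ] fun _ => r := by
    have hindep' : ProbabilityTheory.Indep m₁ m' μ :=
      ProbabilityTheory.indep_of_indep_of_le_right hindep h'2
    have := condExp_indep_eq (μ := μ) (f := a.indicator (fun _ => (1:ℝ))) h1 hm'
      (stronglyMeasurable_const.indicator ha) hindep'
    refine this.trans ?_
    filter_upwards with ω
    simp [MeasureTheory.integral_indicator_const (μ := μ) (1:ℝ) haΩ, hr, measureReal_def]
  have hLHS : (μ⟦(a ∩ c) ∩ t | m'⟧)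
      =ᵐ[μ] fun ω => c.indicator (fun x => r * (μ⟦t|m'⟧) x) ω := by
    have hset : (a ∩ c) ∩ t = c ∩ (a ∩ t) := by
      ext ω; simp only [Set.mem_inter_iff]; tauto
    have heq : (((a ∩ c) ∩ t).indicator (fun _ => (1:ℝ)))
        = c.indicator ((a ∩ t).indicator (fun _ => (1:ℝ))) := by
      rw [hset, ← Set.indicator_indicator]
    calc (μ⟦(a ∩ c) ∩ t | m'⟧)
        = μ[c.indicator ((a ∩ t).indicator (fun _ => (1:ℝ))) | m'] := by rw [heq]
      _ =ᵐ[μ] c.indicator (μ⟦a ∩ t | m'⟧) := condExp_indicator (hint (haΩ.inter htΩ)) hc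
      _ =ᵐ[μ] fun ω => c.indicator (fun x => r * (μ⟦t|m'⟧) x) ω := by
          filter_upwards [hstep2] with ω hω
          by_cases h : ω ∈ c <;> simp [h, hω]
  have hRHS1 : (μ⟦a ∩ c | m'⟧) =ᵐ[μ] fun ω => c.indicator (fun _ => r) ω := by
    have hset : a ∩ c = c ∩ a := Set.inter_comm a c
    have heq : ((a ∩ c).indicator (fun _ => (1:ℝ)))
        = c.indicator (a.indicator (fun _ => (1:ℝ))) := by
      rw [hset, ← Set.indicator_indicator]
    calc (μ⟦a ∩ c | m'⟧) = μ[c.indicator (a.indicator (fun _ => (1:ℝ))) | m'] := by rw [heq]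
      _ =ᵐ[μ] c.indicator (μ⟦a | m'⟧) := condExp_indicator (hint haΩ) hc
      _ =ᵐ[μ] fun ω => c.indicator (fun _ => r) ω := by
          filter_upwards [hstep3] with ω hω
          by_cases h : ω ∈ c <;> simp [h, hω]
  calc (μ⟦(a ∩ c) ∩ t | m'⟧)
      =ᵐ[μ] fun ω => c.indicator (fun x => r * (μ⟦t|m'⟧) x) ω := hLHS
    _ =ᵐ[μ] (μ⟦a ∩ c | m'⟧) * (μ⟦t | m'⟧) := by
        filter_upwards [hRHS1] with ω hω
        simp only [Pi.mul_apply, hω]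
        by_cases h : ω ∈ c <;> simp [h]

/-- If `Z_t = α Y_t + M_t` with `(M₁,...,M_k)` jointly independent of
`(Y₁,...,Y_k)`, then `S_Z = ∑ Z_t` is conditionally independent of `(Y₁,...,Y_k)`
given `S_Y = ∑ Y_t`. -/
theorem stmt10 {Ω : Type*} [MeasurableSpace Ω] [StandardBorelSpace Ω] [Nonempty Ω]
    (μ : Measure Ω) [IsProbabilityMeasure μ] (k : ℕ) (α : ℝ) (Y M Z : Fin k → Ω → ℝ)
    (hY : ∀ i, Measurable (Y i)) (hM : ∀ i, Measurable (M i))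
    (hZdef : ∀ t ω, Z t ω = α * Y t ω + M t ω)
    (hindep : IndepFun (fun ω => (fun i => M i ω)) (fun ω => (fun i => Y i ω)) μ) :
    CondIndepFun
      (MeasurableSpace.comap (fun ω => ∑ i, Y i ω) Real.measurableSpace)
      (Measurable.comap_le (Finset.measurable_sum Finset.univ (fun i _ => hY i)))
      (fun ω => ∑ i, Z i ω) (fun ω => (fun i => Y i ω)) μ := by
  have hMv : Measurable (fun ω => (fun i => M i ω)) :=
    measurable_pi_lambda _ fun i => hM i
  have hYv : Measurable (fun ω => (fun i => Y i ω)) :=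
    measurable_pi_lambda _ fun i => hY i
  have hSum : Measurable (fun v : Fin k → ℝ => ∑ i, v i) :=
    Finset.measurable_sum Finset.univ fun i _ => measurable_pi_apply i
  have h'2 : MeasurableSpace.comap (fun ω => ∑ i, Y i ω) Real.measurableSpace ≤
      MeasurableSpace.comap (fun ω => (fun i => Y i ω)) MeasurableSpace.pi := by
    have : (fun ω => ∑ i, Y i ω)
        = (fun v : Fin k → ℝ => ∑ i, v i) ∘ (fun ω => (fun i => Y i ω)) := rfl
    rw [this, ← MeasurableSpace.comap_comp]
    exact MeasurableSpace.comap_mono hSum.comap_le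
  have hindep' : ProbabilityTheory.Indep
      (MeasurableSpace.comap (fun ω => (fun i => M i ω)) MeasurableSpace.pi)
      (MeasurableSpace.comap (fun ω => (fun i => Y i ω)) MeasurableSpace.pi) μ := hindep
  have hmain := aux_condIndep hMv.comap_le hYv.comap_le h'2
    (Measurable.comap_le (Finset.measurable_sum Finset.univ (fun i _ => hY i))) hindep'
  rw [ProbabilityTheory.condIndepFun_iff_condIndep]
  refine Kernel.indep_of_indep_of_le_left hmain ?_
  -- comap S_Z ≤ comap Mv ⊔ comap S_Y
  refine Measurable.comap_le ?_
  have hfun : (fun ω => ∑ i, Z i ω)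
      = fun ω => α * (∑ i, Y i ω) + ∑ i, M i ω := by
    funext ω
    simp only [hZdef, Finset.sum_add_distrib, Finset.mul_sum]
  rw [hfun]
  have hSY' : Measurable[MeasurableSpace.comap (fun ω => ∑ i, Y i ω) Real.measurableSpace]
      (fun ω => ∑ i, Y i ω) := comap_measurable _
  have hSM : Measurable[MeasurableSpace.comap (fun ω => (fun i => M i ω)) MeasurableSpace.pi]
      (fun ω => ∑ i, M i ω) :=
    hSum.comp (comap_measurable _)
  exact ((hSY'.mono le_sup_right le_rfl).const_mul α).add (hSM.mono le_sup_left le_rfl)
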